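/- arXiv:0803.0473 — 8 statements merged into one kernel-verified Lean document; each statement's English description precedes it below -/
import Mathlib

section
/- Let n items have unbiased weight estimators ŵ_i of weights w_i. Define ΣV = Σ_i Var[ŵ_i] and VΣ = Var[Σ_i ŵ_i]. Then the average variance over subsets of size m satisfies V_m = (m/n)·((n-m)/(n-1)·ΣV + (m-1)/(n-1)·VΣ), where V_m is the average of Var[Σ_{i∈I} ŵ_i] over all subsets I ⊆ [n] with |I| = m, assuming n ≥ 2. -/
open MeasureTheory ProbabilityTheory Finset


lemma count_subsets {α : Type*} [DecidableEq α] (s t : Finset α) (m : ℕ)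
    (hts : t ⊆ s) (htm : t.card ≤ m) :
    ((powersetCard m s).filter (fun I => t ⊆ I)).card
      = (s.card - t.card).choose (m - t.card) := by
  rw [← card_sdiff_of_subset hts, ← card_powersetCard (m - t.card) (s \ t)]
  apply card_bij' (fun I _ => I \ t) (fun J _ => J ∪ t)
  · intro I hI
    simp only [mem_filter, mem_powersetCard] at hI
    exact mem_powersetCard.2 ⟨sdiff_subset_sdiff hI.1.1 le_rfl,
      by rw [card_sdiff_of_subset hI.2, hI.1.2]⟩
  · intro J hJ
    simp only [mem_powersetCard] at hJ
    have hdisj : Disjoint J t := disjoint_of_subset_left hJ.1 sdiff_disjoint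
    refine mem_filter.2 ⟨mem_powersetCard.2 ⟨union_subset (hJ.1.trans (sdiff_subset)) hts, ?_⟩,
      subset_union_right⟩
    rw [card_union_of_disjoint hdisj, hJ.2, Nat.sub_add_cancel htm]
  · intro I hI
    simp only [mem_filter] at hI
    exact sdiff_union_of_subset hI.2
  · intro J hJ
    simp only [mem_powersetCard] at hJ
    have hdisj : Disjoint J t := disjoint_of_subset_left hJ.1 sdiff_disjoint
    rw [union_sdiff_right, sdiff_eq_self_of_disjoint hdisj]

lemma count_subsets_zero {α : Type*} [DecidableEq α] (s t : Finset α) (m : ℕ)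
    (htm : m < t.card) :
    ((powersetCard m s).filter (fun I => t ⊆ I)).card = 0 := by
  rw [card_eq_zero, filter_eq_empty_iff]
  intro I hI hsub
  have := card_le_card hsub
  rw [(mem_powersetCard.1 hI).2] at this
  omega

lemma l2_integrable_mul {Ω : Type*} [MeasureSpace Ω] [IsProbabilityMeasure (ℙ : Measure Ω)]
    {f g : Ω → ℝ} (hf : MemLp f 2 ℙ) (hg : MemLp g 2 ℙ) :
    Integrable (fun ω => f ω * g ω) ℙ := by
  have : MemLp (f • g) 1 ℙ := hg.smul hf
  rw [smul_eq_mul] at this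
  exact memLp_one_iff_integrable.mp this

lemma var_sum_eq {Ω : Type*} [MeasureSpace Ω] [IsProbabilityMeasure (ℙ : Measure Ω)]
    {ι : Type*} (I : Finset ι) (X : ι → Ω → ℝ) (w : ι → ℝ)
    (h2 : ∀ i, MemLp (X i) 2 ℙ) (hw : ∀ i, ∫ ω, X i ω ∂ℙ = w i) :
    variance (fun ω => ∑ i ∈ I, X i ω) ℙ
      = ∑ i ∈ I, ∑ j ∈ I, ∫ ω, (X i ω - w i) * (X j ω - w j) ∂ℙ := by
  set Y : ι → Ω → ℝ := fun i ω => X i ω - w i with hY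
  have hY2 : ∀ i, MemLp (Y i) 2 ℙ := fun i => (h2 i).sub (memLp_const _)
  have hYint : ∀ i, ∫ ω, Y i ω ∂ℙ = 0 := by
    intro i
    rw [hY]
    rw [integral_sub ((h2 i).integrable one_le_two) (integrable_const _), hw i]
    simp
  have hS2 : MemLp (fun ω => ∑ i ∈ I, X i ω) 2 ℙ :=
    memLp_finset_sum I (fun i _ => h2 i)
  have hZ2 : MemLp (fun ω => ∑ i ∈ I, Y i ω) 2 ℙ :=
    memLp_finset_sum I (fun i _ => hY2 i)
  have hZint : ∫ ω, ∑ i ∈ I, Y i ω ∂ℙ = 0 := by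
    rw [integral_finset_sum I (fun i _ => (hY2 i).integrable one_le_two)]
    simp [hYint]
  have hSmean : ∫ ω, ∑ i ∈ I, X i ω ∂ℙ = ∑ i ∈ I, w i := by
    rw [integral_finset_sum I (fun i _ => (h2 i).integrable one_le_two)]
    simp [hw]
  have key : variance (fun ω => ∑ i ∈ I, X i ω) ℙ
      = variance (fun ω => ∑ i ∈ I, Y i ω) ℙ := by
    rw [variance_eq_integral hS2.aestronglyMeasurable.aemeasurable, variance_eq_integral hZ2.aestronglyMeasurable.aemeasurable]
    congr 1
    funext ω
    rw [hSmean, hZint, hY]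
    simp [Finset.sum_sub_distrib]
  rw [key, variance_of_integral_eq_zero hZ2.aestronglyMeasurable.aemeasurable hZint]
  have hexp : ((fun ω => ∑ i ∈ I, Y i ω) ^ (2:ℕ))
      = fun ω => ∑ i ∈ I, ∑ j ∈ I, Y i ω * Y j ω := by
    funext ω
    simp only [Pi.pow_apply]
    rw [sq, Finset.sum_mul_sum]
  rw [show (∫ ω, (∑ i ∈ I, Y i ω) ^ 2 ∂ℙ) = ∫ ω, ((fun ω => ∑ i ∈ I, Y i ω) ^ (2:ℕ)) ω ∂ℙ from rfl,
    hexp, integral_finset_sum I (fun i _ => integrable_finset_sum I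
    (fun j _ => l2_integrable_mul (hY2 i) (hY2 j)))]
  exact Finset.sum_congr rfl fun i _ => integral_finset_sum I
    (fun j _ => l2_integrable_mul (hY2 i) (hY2 j))


theorem avg_variance_subsets
    {Ω : Type*} [MeasureSpace Ω] [IsProbabilityMeasure (ℙ : Measure Ω)]
    (n : ℕ) (hn : 2 ≤ n) (w : Fin n → ℝ) (what : Fin n → Ω → ℝ)
    (hL2 : ∀ i, MemLp (what i) 2 ℙ)
    (hunb : ∀ i, ∫ ω, what i ω ∂ℙ = w i)
    (m : ℕ) (hm : m ≤ n)
    (SV VS Vm : ℝ)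
    (hSV : SV = ∑ i, variance (what i) ℙ)
    (hVS : VS = variance (fun ω => ∑ i, what i ω) ℙ)
    (hVm : Vm = (∑ I ∈ Finset.powersetCard m (Finset.univ : Finset (Fin n)),
        variance (fun ω => ∑ i ∈ I, what i ω) ℙ) / (n.choose m : ℝ)) :
    Vm = ((m : ℝ) / n) * (((n : ℝ) - m) / ((n : ℝ) - 1) * SV
      + ((m : ℝ) - 1) / ((n : ℝ) - 1) * VS) := by
  set c : Fin n → Fin n → ℝ :=
    fun i j => ∫ ω, (what i ω - w i) * (what j ω - w j) ∂ℙ with hc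
  have hvar : ∀ I : Finset (Fin n),
      variance (fun ω => ∑ i ∈ I, what i ω) ℙ = ∑ i ∈ I, ∑ j ∈ I, c i j :=
    fun I => var_sum_eq I what w hL2 hunb
  have hSV' : SV = ∑ i, c i i := by
    rw [hSV]
    refine Finset.sum_congr rfl fun i _ => ?_
    have h := hvar {i}
    simpa using h
  have hVS' : VS = ∑ i, ∑ j, c i j := by
    rw [hVS]; exact hvar univ
  -- counting quantities
  set d1 : ℕ := if m = 0 then 0 else (n - 1).choose (m - 1) with hd1def
  set d2 : ℕ := if m ≤ 1 then 0 else (n - 2).choose (m - 2) with hd2def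
  have hNdiag : ∀ i : Fin n,
      ((powersetCard m (univ : Finset (Fin n))).filter (fun I => i ∈ I ∧ i ∈ I)).card = d1 := by
    intro i
    have hpred : (powersetCard m (univ : Finset (Fin n))).filter (fun I => i ∈ I ∧ i ∈ I)
        = (powersetCard m (univ : Finset (Fin n))).filter (fun I => ({i} : Finset (Fin n)) ⊆ I) := by
      apply filter_congr; intro I _; simp
    rw [hpred]
    rcases Nat.eq_zero_or_pos m with hm0 | hm1
    · rw [hd1def, if_pos hm0, count_subsets_zero]
      simp [hm0]
    · rw [count_subsets _ _ _ (subset_univ _) (by simpa using Nat.succ_le_of_lt hm1), hd1def,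
        if_neg (by omega)]
      simp
  have hNoff : ∀ i j : Fin n, i ≠ j →
      ((powersetCard m (univ : Finset (Fin n))).filter (fun I => i ∈ I ∧ j ∈ I)).card = d2 := by
    intro i j hij
    have hpred : (powersetCard m (univ : Finset (Fin n))).filter (fun I => i ∈ I ∧ j ∈ I)
        = (powersetCard m (univ : Finset (Fin n))).filter
            (fun I => ({i, j} : Finset (Fin n)) ⊆ I) := by
      apply filter_congr; intro I _; simp [insert_subset_iff]
    have hcard2 : ({i, j} : Finset (Fin n)).card = 2 := card_pair hij
    rw [hpred]
    rcases le_or_gt m 1 with hm1 | hm2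
    · rw [hd2def, if_pos hm1, count_subsets_zero]
      omega
    · rw [count_subsets _ _ _ (subset_univ _) (by omega), hd2def, if_neg (by omega),
        card_univ, Fintype.card_fin, hcard2]
  -- the total sum over subsets
  have hswap : ∀ (i j : Fin n), (∑ I ∈ powersetCard m (univ : Finset (Fin n)),
        if i ∈ I ∧ j ∈ I then c i j else 0)
      = (((powersetCard m (univ : Finset (Fin n))).filter (fun I => i ∈ I ∧ j ∈ I)).card : ℝ)
          * c i j := by
    intro i j
    rw [← Finset.sum_filter, Finset.sum_const, nsmul_eq_mul]
  have hstep1 : ∀ I ∈ powersetCard m (univ : Finset (Fin n)),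
      (∑ i ∈ I, ∑ j ∈ I, c i j)
        = ∑ i : Fin n, ∑ j : Fin n, if i ∈ I ∧ j ∈ I then c i j else 0 := by
    intro I _
    have hj : ∀ i : Fin n, (∑ j ∈ I, c i j) = ∑ j : Fin n, if j ∈ I then c i j else 0 :=
      fun i => by rw [Finset.sum_ite_mem, univ_inter]
    calc (∑ i ∈ I, ∑ j ∈ I, c i j)
        = ∑ i : Fin n, if i ∈ I then ∑ j ∈ I, c i j else 0 := by
          rw [Finset.sum_ite_mem, univ_inter]
      _ = ∑ i : Fin n, ∑ j : Fin n, if i ∈ I ∧ j ∈ I then c i j else 0 := by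
          refine Finset.sum_congr rfl fun i _ => ?_
          by_cases h : i ∈ I
          · simp only [h, if_true, true_and, hj i]
          · simp [h]
  have htotal : (∑ I ∈ powersetCard m (univ : Finset (Fin n)),
        variance (fun ω => ∑ i ∈ I, what i ω) ℙ)
      = (d1 : ℝ) * SV + (d2 : ℝ) * (VS - SV) := by
    calc (∑ I ∈ powersetCard m (univ : Finset (Fin n)),
          variance (fun ω => ∑ i ∈ I, what i ω) ℙ)
        = ∑ I ∈ powersetCard m (univ : Finset (Fin n)),
            ∑ i : Fin n, ∑ j : Fin n, if i ∈ I ∧ j ∈ I then c i j else 0 := by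
          refine Finset.sum_congr rfl fun I hI => ?_
          rw [hvar I, hstep1 I hI]
      _ = ∑ i : Fin n, ∑ j : Fin n, ∑ I ∈ powersetCard m (univ : Finset (Fin n)),
            (if i ∈ I ∧ j ∈ I then c i j else 0) := by
          rw [Finset.sum_comm]
          exact Finset.sum_congr rfl fun i _ => Finset.sum_comm
      _ = ∑ i : Fin n, ∑ j : Fin n,
            (if i = j then (d1 : ℝ) * c i j else (d2 : ℝ) * c i j) := by
          refine Finset.sum_congr rfl fun i _ => Finset.sum_congr rfl fun j _ => ?_
          rw [hswap i j]
          by_cases h : i = j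
          · subst h; rw [hNdiag i, if_pos rfl]
          · rw [hNoff i j h, if_neg h]
      _ = ∑ i : Fin n, ∑ j : Fin n,
            ((d2 : ℝ) * c i j + (if i = j then (d1 : ℝ) * c i j - (d2 : ℝ) * c i j else 0)) := by
          refine Finset.sum_congr rfl fun i _ => Finset.sum_congr rfl fun j _ => ?_
          by_cases h : i = j <;> simp [h]
      _ = (d2 : ℝ) * VS + ((d1 : ℝ) * SV - (d2 : ℝ) * SV) := by
          rw [hVS', hSV']
          simp only [Finset.sum_add_distrib, Finset.sum_ite_eq, mem_univ, if_true,
            ← Finset.mul_sum, Finset.sum_sub_distrib]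
      _ = (d1 : ℝ) * SV + (d2 : ℝ) * (VS - SV) := by ring
  -- numeric identities
  have hcc : (0 : ℝ) < (n.choose m : ℝ) := by
    exact_mod_cast Nat.choose_pos hm
  have hn0 : (0 : ℝ) < (n : ℝ) := by exact_mod_cast (Nat.lt_of_lt_of_le Nat.zero_lt_two hn)
  have hn1 : (0 : ℝ) < (n : ℝ) - 1 := by
    have : (2 : ℝ) ≤ (n : ℝ) := by exact_mod_cast hn
    linarith
  have hd1 : (d1 : ℝ) * n = (n.choose m : ℝ) * m := by
    rcases Nat.eq_zero_or_pos m with hm0 | hm1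
    · subst hm0; simp [hd1def]
    · obtain ⟨k, rfl⟩ := Nat.exists_eq_add_of_le hm1
      rw [hd1def, if_neg (by omega)]
      have hnat : n * (n - 1).choose k = n.choose (k + 1) * (k + 1) := by
        have h := Nat.add_one_mul_choose_eq (n - 1) k
        rwa [Nat.sub_add_cancel (by omega)] at h
      have h2 : (1 : ℕ) + k - 1 = k := by omega
      rw [h2]
      have hgoal : (n - 1).choose k * n = n.choose (1 + k) * (1 + k) := by
        rw [Nat.add_comm 1 k, mul_comm]; exact hnat
      exact_mod_cast hgoal
  have hd2 : (d2 : ℝ) * ((n : ℝ) * ((n : ℝ) - 1)) = (n.choose m : ℝ) * ((m : ℝ) * ((m : ℝ) - 1)) := by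
    rcases le_or_gt m 1 with hm1 | hm2
    · interval_cases m
      · simp [hd2def]
      · simp [hd2def]
    · obtain ⟨k, rfl⟩ := Nat.exists_eq_add_of_le hm2
      rw [hd2def, if_neg (by omega)]
      have hA : (n - 1) * (n - 2).choose k = (n - 1).choose (k + 1) * (k + 1) := by
        have h := Nat.add_one_mul_choose_eq (n - 2) k
        rwa [show n - 2 + 1 = n - 1 from by omega] at h
      have hB : n * (n - 1).choose (k + 1) = n.choose (k + 2) * (k + 2) := by
        have h := Nat.add_one_mul_choose_eq (n - 1) (k + 1)
        rwa [Nat.sub_add_cancel (by omega)] at h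
      have hnat : n * ((n - 1) * (n - 2).choose k) = n.choose (k + 2) * ((k + 2) * (k + 1)) := by
        rw [hA, ← mul_assoc, hB]; ring
      have hcast1 : ((n - 1 : ℕ) : ℝ) = (n : ℝ) - 1 := by
        have : (1 : ℕ) ≤ n := by omega
        push_cast [this]; ring
      have h2 : (2 : ℕ) + k - 2 = k := by omega
      rw [h2, show (2 + k : ℕ) = k + 2 from by omega]
      have := congrArg (fun x : ℕ => (x : ℝ)) hnat
      push_cast at this
      rw [hcast1] at this
      push_cast
      nlinarith [this]
  rw [hVm, htotal]
  rw [div_eq_iff (ne_of_gt hcc)]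
  field_simp
  linear_combination (SV * ((n:ℝ) - 1)) * hd1 + (VS - SV) * hd2
end

section
/- For positive weights w_1,...,w_n and integer k with 1 ≤ k < n, there exists a unique τ > 0 such that Σ_{i=1}^n min{1, w_i/τ} = k. -/
open Finset

theorem ipps_threshold_exists_unique
    (n k : ℕ) (hk : 1 ≤ k) (hkn : k < n) (w : Fin n → ℝ) (hw : ∀ i, 0 < w i) :
    ∃! τ : ℝ, 0 < τ ∧ ∑ i, min 1 (w i / τ) = (k : ℝ) := by
  have hn : 0 < n := lt_of_le_of_lt (Nat.zero_le k) hkn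
  haveI : Nonempty (Fin n) := ⟨⟨0, hn⟩⟩
  set f : ℝ → ℝ := fun τ => ∑ i, min 1 (w i / τ) with hf
  -- key: strict decrease when value < n
  have key : ∀ τ1 τ2 : ℝ, 0 < τ1 → τ1 < τ2 → f τ1 = (k : ℝ) → f τ2 < f τ1 := by
    intro τ1 τ2 h1 h12 hfk
    have h2 : 0 < τ2 := h1.trans h12
    -- some term at τ1 is < 1
    have hex : ∃ i : Fin n, w i / τ1 < 1 := by
      by_contra h
      push_neg at h
      have : f τ1 = (n : ℝ) := by
        simp only [hf]
        rw [Finset.sum_congr rfl (fun i _ => min_eq_left (h i))]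
        simp
      rw [hfk] at this
      exact absurd (Nat.cast_injective this) hkn.ne
    obtain ⟨i0, hi0⟩ := hex
    apply Finset.sum_lt_sum
    · intro i _
      exact min_le_min le_rfl (div_le_div_of_nonneg_left (hw i).le h1 h12.le)
    · refine ⟨i0, Finset.mem_univ _, ?_⟩
      have hlt : w i0 / τ2 < w i0 / τ1 := div_lt_div_of_pos_left (hw i0) h1 h12
      calc min 1 (w i0 / τ2) ≤ w i0 / τ2 := min_le_right _ _
        _ < w i0 / τ1 := hlt
        _ = min 1 (w i0 / τ1) := (min_eq_right hi0.le).symm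
  -- existence via IVT
  set a : ℝ := Finset.univ.inf' Finset.univ_nonempty w with ha
  have hale : ∀ i, a ≤ w i := fun i => Finset.inf'_le _ (Finset.mem_univ i)
  have hapos : 0 < a := by
    obtain ⟨i, _, hi⟩ := Finset.exists_mem_eq_inf' Finset.univ_nonempty w
    rw [ha, hi]; exact hw i
  set b : ℝ := ∑ i, w i with hb
  have hbpos : 0 < b := Finset.sum_pos (fun i _ => hw i) Finset.univ_nonempty
  have hab : a ≤ b := by
    obtain ⟨i, _, hi⟩ := Finset.exists_mem_eq_inf' Finset.univ_nonempty w
    rw [ha, hi]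
    exact Finset.single_le_sum (fun j _ => (hw j).le) (Finset.mem_univ i)
  have hcont : ContinuousOn f (Set.Icc a b) := by
    apply continuousOn_finset_sum
    intro i _
    have h1 : ContinuousOn (fun τ : ℝ => w i / τ) (Set.Icc a b) :=
      continuousOn_const.div continuousOn_id
        (fun x hx => ne_of_gt (lt_of_lt_of_le hapos hx.1))
    exact fun x hx => (continuousWithinAt_const).min (h1 x hx)
  have hfa : f a = (n : ℝ) := by
    simp only [hf]
    rw [Finset.sum_congr rfl (fun i _ => min_eq_left ((one_le_div hapos).2 (hale i)))]
    simp
  have hfb : f b ≤ 1 := by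
    calc f b ≤ ∑ i, w i / b := Finset.sum_le_sum (fun i _ => min_le_right _ _)
      _ = b / b := by rw [← Finset.sum_div]
      _ = 1 := div_self hbpos.ne'
  have hmem : (k : ℝ) ∈ Set.Icc (f b) (f a) := by
    constructor
    · exact hfb.trans (by exact_mod_cast hk)
    · rw [hfa]; exact_mod_cast hkn.le
  obtain ⟨τ0, hτ0mem, hτ0⟩ := intermediate_value_Icc' hab hcont hmem
  have hτ0pos : 0 < τ0 := lt_of_lt_of_le hapos hτ0mem.1
  refine ⟨τ0, ⟨hτ0pos, hτ0⟩, ?_⟩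
  rintro y ⟨hypos, hy'⟩
  have hy : f y = (k : ℝ) := hy'
  by_contra hne
  rcases lt_or_gt_of_ne hne with h | h
  · have := key y τ0 hypos h hy
    rw [hτ0, hy] at this; exact lt_irrefl _ this
  · have := key τ0 y hτ0pos h hτ0
    rw [hτ0, hy] at this; exact lt_irrefl _ this
end

section
/- In the VarOpt_{k,k+1} scheme dropping exactly one of n = k+1 items, with item i dropped with probability q_i = 1 − p_i where Σ_i p_i = k, the inclusion events satisfy property (iii+)(I): for any subset J of items, Pr[all items of J are in the sample] ≤ Π_{i∈J} p_i. -/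
open MeasureTheory ProbabilityTheory Finset

lemma weierstrass_aux {ι : Type*} [DecidableEq ι] (s : Finset ι) (f : ι → ℝ)
    (h0 : ∀ i ∈ s, 0 ≤ f i) (h1 : ∀ i ∈ s, f i ≤ 1) :
    1 - ∑ i ∈ s, f i ≤ ∏ i ∈ s, (1 - f i) := by
  induction s using Finset.induction_on with
  | empty => simp
  | @insert a s hx ih =>
    rw [Finset.sum_insert hx, Finset.prod_insert hx]
    have h0' : ∀ i ∈ s, 0 ≤ f i := fun i hi => h0 i (Finset.mem_insert_of_mem hi)
    have h1' : ∀ i ∈ s, f i ≤ 1 := fun i hi => h1 i (Finset.mem_insert_of_mem hi)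
    have hih := ih h0' h1'
    have ha0 := h0 a (Finset.mem_insert_self a s)
    have ha1 := h1 a (Finset.mem_insert_self a s)
    have hs0 : 0 ≤ ∑ i ∈ s, f i := Finset.sum_nonneg h0'
    nlinarith [Finset.sum_nonneg h0']

theorem varopt_drop_one_inclusion_bound
    {Ω : Type*} [MeasureSpace Ω] [IsProbabilityMeasure (ℙ : Measure Ω)]
    (n : ℕ) (q : Fin n → ℝ) (hq0 : ∀ i, 0 ≤ q i) (hq1 : ∀ i, q i ≤ 1)
    (hqsum : ∑ i, q i = 1)
    (d : Ω → Fin n) (hd : Measurable d)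
    (hdist : ∀ i, (ℙ {ω | d ω = i}).toReal = q i)
    (J : Finset (Fin n)) :
    (ℙ {ω | ∀ j ∈ J, d ω ≠ j}).toReal ≤ ∏ j ∈ J, (1 - q j) := by
  have hmeas : ∀ i : Fin n, MeasurableSet {ω | d ω = i} :=
    fun i => hd (measurableSet_singleton i)
  have hset : {ω | ∀ j ∈ J, d ω ≠ j} = (⋃ j ∈ J, {ω | d ω = j})ᶜ := by
    ext ω; simp
  have hdisj : (J : Set (Fin n)).PairwiseDisjoint (fun i => {ω | d ω = i}) := by
    intro i _ j _ hij
    refine Set.disjoint_left.mpr ?_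
    intro ω h1 h2
    exact hij (h1 ▸ h2.symm ▸ rfl)
  have hunion : ℙ (⋃ j ∈ J, {ω | d ω = j}) = ∑ j ∈ J, ℙ {ω | d ω = j} :=
    measure_biUnion_finset hdisj (fun i _ => hmeas i)
  have hne : ∀ j ∈ J, ℙ {ω | d ω = j} ≠ ⊤ := fun j _ => measure_ne_top _ _
  have hmU : MeasurableSet (⋃ j ∈ J, {ω | d ω = j}) :=
    MeasurableSet.biUnion J.countable_toSet (fun i _ => hmeas i)
  have hc : ℙ ((⋃ j ∈ J, {ω | d ω = j})ᶜ) = 1 - ℙ (⋃ j ∈ J, {ω | d ω = j}) :=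
    prob_compl_eq_one_sub hmU
  have hcompl : (ℙ {ω | ∀ j ∈ J, d ω ≠ j}).toReal = 1 - ∑ j ∈ J, q j := by
    rw [hset, hc, ENNReal.toReal_sub_of_le (prob_le_one) (by simp),
      hunion, ENNReal.toReal_sum hne]
    simp [hdist]
  rw [hcompl]
  exact weierstrass_aux J q (fun i _ => hq0 i) (fun i _ => hq1 i)
end

section
/- Let X_1,...,X_m be 0/1 random variables (not necessarily independent) satisfying: for every subset J ⊆ [m], Pr[∀j∈J, X_j = 1] ≤ Π_{j∈J} Pr[X_j = 1]. Let X = Σ_i X_i. Then for every t ≥ 0 and every k ≥ 0, E[X^k] ≤ E[X̂^k], where X̂ = Σ_i X̂_i with X̂_i independent 0/1 variables having the same marginals as X_i. -/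
open MeasureTheory ProbabilityTheory Finset

lemma prod_eq_indicator {Ω : Type*} {m k : ℕ} (Y : Fin m → Ω → ℝ)
    (h01 : ∀ i ω, Y i ω = 0 ∨ Y i ω = 1) (p : Fin k → Fin m) :
    (fun ω => ∏ j, Y (p j) ω) =
      Set.indicator {ω | ∀ i ∈ Finset.image p Finset.univ, Y i ω = 1} 1 := by
  funext ω
  by_cases h : ω ∈ {ω | ∀ i ∈ Finset.image p Finset.univ, Y i ω = 1}
  · rw [Set.indicator_of_mem h]
    simp only [Set.mem_setOf_eq] at h
    have : ∀ j : Fin k, Y (p j) ω = 1 := fun j =>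
      h (p j) (Finset.mem_image_of_mem p (Finset.mem_univ j))
    simp [this]
  · rw [Set.indicator_of_notMem h]
    simp only [Set.mem_setOf_eq, not_forall] at h
    obtain ⟨i, hi, hne⟩ := h
    obtain ⟨j, _, rfl⟩ := Finset.mem_image.mp hi
    have : Y (p j) ω = 0 := (h01 (p j) ω).resolve_right hne
    exact Finset.prod_eq_zero (Finset.mem_univ j) this

lemma setOf_eq_iInter {Ω : Type*} {m : ℕ} (Y : Fin m → Ω → ℝ) (s : Finset (Fin m)) :
    {ω | ∀ i ∈ s, Y i ω = 1} = ⋂ i ∈ s, Y i ⁻¹' {1} := by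
  ext ω; simp

lemma meas_setOf {Ω : Type*} [MeasurableSpace Ω] {m : ℕ} (Y : Fin m → Ω → ℝ)
    (hmeas : ∀ i, Measurable (Y i)) (s : Finset (Fin m)) :
    MeasurableSet {ω | ∀ i ∈ s, Y i ω = 1} := by
  rw [setOf_eq_iInter]
  exact MeasurableSet.biInter s.countable_toSet
    (fun i _ => hmeas i (measurableSet_singleton 1))

lemma integral_prod_indicator {Ω : Type*} [MeasurableSpace Ω] (μ : Measure Ω)
    [IsProbabilityMeasure μ] {m k : ℕ} (Y : Fin m → Ω → ℝ)
    (h01 : ∀ i ω, Y i ω = 0 ∨ Y i ω = 1) (hmeas : ∀ i, Measurable (Y i))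
    (p : Fin k → Fin m) :
    ∫ ω, ∏ j, Y (p j) ω ∂μ =
      (μ {ω | ∀ i ∈ Finset.image p Finset.univ, Y i ω = 1}).toReal := by
  rw [prod_eq_indicator Y h01 p]
  exact integral_indicator_one (meas_setOf Y hmeas _)

lemma integrable_prod {Ω : Type*} [MeasurableSpace Ω] (μ : Measure Ω)
    [IsProbabilityMeasure μ] {m k : ℕ} (Y : Fin m → Ω → ℝ)
    (h01 : ∀ i ω, Y i ω = 0 ∨ Y i ω = 1) (hmeas : ∀ i, Measurable (Y i))
    (p : Fin k → Fin m) :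
    Integrable (fun ω => ∏ j, Y (p j) ω) μ := by
  rw [prod_eq_indicator Y h01 p]
  exact (integrable_const (1 : ℝ)).indicator (meas_setOf Y hmeas _)

theorem neg_corr_moment_bound
    {Ω Ω' : Type*} [MeasurableSpace Ω] [MeasurableSpace Ω']
    (μ : Measure Ω) (μ' : Measure Ω') [IsProbabilityMeasure μ] [IsProbabilityMeasure μ']
    (m : ℕ) (X : Fin m → Ω → ℝ) (Xhat : Fin m → Ω' → ℝ)
    (hX01 : ∀ i ω, X i ω = 0 ∨ X i ω = 1)
    (hXhat01 : ∀ i ω, Xhat i ω = 0 ∨ Xhat i ω = 1)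
    (hXmeas : ∀ i, Measurable (X i)) (hXhatmeas : ∀ i, Measurable (Xhat i))
    (hneg : ∀ J : Finset (Fin m),
      (μ {ω | ∀ j ∈ J, X j ω = 1}).toReal ≤ ∏ j ∈ J, (μ {ω | X j ω = 1}).toReal)
    (hindep : iIndepFun Xhat μ')
    (hmarg : ∀ i, (μ' {ω | Xhat i ω = 1}).toReal = (μ {ω | X i ω = 1}).toReal)
    (t : ℝ) (ht : 0 ≤ t) (k : ℕ) :
    ∫ ω, (∑ i, X i ω) ^ k ∂μ ≤ ∫ ω, (∑ i, Xhat i ω) ^ k ∂μ' := by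
  have hXexp : ∫ ω, (∑ i, X i ω) ^ k ∂μ =
      ∑ p ∈ Fintype.piFinset (fun _ : Fin k => (Finset.univ : Finset (Fin m))),
        (μ {ω | ∀ i ∈ Finset.image p Finset.univ, X i ω = 1}).toReal := by
    simp_rw [Finset.sum_pow']
    rw [integral_finset_sum _ (fun p _ => integrable_prod μ X hX01 hXmeas p)]
    exact Finset.sum_congr rfl fun p _ => integral_prod_indicator μ X hX01 hXmeas p
  have hXhatexp : ∫ ω, (∑ i, Xhat i ω) ^ k ∂μ' =
      ∑ p ∈ Fintype.piFinset (fun _ : Fin k => (Finset.univ : Finset (Fin m))),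
        (μ' {ω | ∀ i ∈ Finset.image p Finset.univ, Xhat i ω = 1}).toReal := by
    simp_rw [Finset.sum_pow']
    rw [integral_finset_sum _ (fun p _ => integrable_prod μ' Xhat hXhat01 hXhatmeas p)]
    exact Finset.sum_congr rfl fun p _ => integral_prod_indicator μ' Xhat hXhat01 hXhatmeas p
  have hindep' : ∀ s : Finset (Fin m),
      (μ' {ω | ∀ i ∈ s, Xhat i ω = 1}).toReal = ∏ i ∈ s, (μ' {ω | Xhat i ω = 1}).toReal := by
    intro s
    rw [setOf_eq_iInter,
      hindep.measure_inter_preimage_eq_mul s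
        (sets := fun _ => ({1} : Set ℝ)) (fun i _ => measurableSet_singleton 1),
      ENNReal.toReal_prod]
    exact Finset.prod_congr rfl fun i _ => rfl
  rw [hXexp, hXhatexp]
  refine Finset.sum_le_sum fun p _ => ?_
  rw [hindep' (Finset.image p Finset.univ)]
  calc (μ {ω | ∀ i ∈ Finset.image p Finset.univ, X i ω = 1}).toReal
      ≤ ∏ i ∈ Finset.image p Finset.univ, (μ {ω | X i ω = 1}).toReal := hneg _
    _ = ∏ i ∈ Finset.image p Finset.univ, (μ' {ω | Xhat i ω = 1}).toReal :=
        Finset.prod_congr rfl fun i _ => (hmarg i).symm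
end

section
/- Let X_1,...,X_m be 0/1 random variables with Pr[X_i=1] = p_i satisfying the upward negative correlation condition Pr[∀j∈J, X_j=1] ≤ Π_{j∈J} p_j for all J. Let X = Σ X_i and μ = Σ p_i. Then for all a with μ ≤ a < m: Pr[X ≥ a] ≤ ((m−μ)/(m−a))^{m−a} · (μ/a)^a. -/
open MeasureTheory ProbabilityTheory Finset

lemma amgm_aux {ι : Type*} (s : Finset ι) (hs : s.Nonempty) (z : ι → ℝ)
    (hz : ∀ i ∈ s, 0 ≤ z i) :
    ∏ i ∈ s, z i ≤ ((∑ i ∈ s, z i) / s.card) ^ s.card := by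
  have hn : (0:ℝ) < s.card := by exact_mod_cast Finset.card_pos.mpr hs
  have h := Real.geom_mean_le_arith_mean_weighted s (fun _ => (s.card:ℝ)⁻¹) z
    (fun i _ => by positivity) (by
      simp only [Finset.sum_const, nsmul_eq_mul]
      field_simp) hz
  have h2 : ∏ i ∈ s, z i = (∏ i ∈ s, z i ^ ((s.card:ℝ)⁻¹)) ^ s.card := by
    rw [← Finset.prod_pow]
    refine Finset.prod_congr rfl fun i hi => ?_
    rw [← Real.rpow_natCast (z i ^ ((s.card:ℝ)⁻¹)) s.card, ← Real.rpow_mul (hz i hi),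
      inv_mul_cancel₀ (ne_of_gt hn), Real.rpow_one]
  rw [h2]
  calc (∏ i ∈ s, z i ^ ((s.card:ℝ)⁻¹)) ^ s.card
      ≤ (∑ i ∈ s, ((s.card:ℝ)⁻¹) * z i) ^ s.card := by
        exact pow_le_pow_left₀ (Finset.prod_nonneg fun i hi => Real.rpow_nonneg (hz i hi) _) h _
    _ = _ := by rw [← Finset.mul_sum]; ring

theorem neg_corr_chernoff_upper_tail
    {Ω : Type*} [MeasurableSpace Ω]
    (μ : Measure Ω) [IsProbabilityMeasure μ]
    (m : ℕ) (X : Fin m → Ω → ℝ)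
    (hX01 : ∀ i ω, X i ω = 0 ∨ X i ω = 1)
    (hXmeas : ∀ i, Measurable (X i))
    (p : Fin m → ℝ) (hp : ∀ i, (μ {ω | X i ω = 1}).toReal = p i)
    (hneg : ∀ J : Finset (Fin m),
      (μ {ω | ∀ j ∈ J, X j ω = 1}).toReal ≤ ∏ j ∈ J, p j)
    (mu : ℝ) (hmu : mu = ∑ i, p i)
    (a : ℝ) (ha : mu ≤ a) (ham : a < m) :
    (μ {ω | a ≤ ∑ i, X i ω}).toReal ≤
      (((m : ℝ) - mu) / ((m : ℝ) - a)) ^ ((m : ℝ) - a) * (mu / a) ^ a := by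
  classical
  have hp0 : ∀ i, 0 ≤ p i := fun i => (hp i) ▸ ENNReal.toReal_nonneg
  have hmu0 : 0 ≤ mu := hmu ▸ Finset.sum_nonneg fun i _ => hp0 i
  have ha0 : 0 ≤ a := hmu0.trans ha
  have hmR : (0:ℝ) < m := lt_of_le_of_lt ha0 ham
  have hm : 0 < m := by exact_mod_cast hmR
  have hma : 0 < (m:ℝ) - a := by linarith
  have hmmu : 0 < (m:ℝ) - mu := by linarith
  set s : Ω → Finset (Fin m) := fun ω => univ.filter (fun i => X i ω = 1) with hs
  have hsmem : ∀ ω i, i ∈ s ω ↔ X i ω = 1 := by intro ω i; simp [hs]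
  have hmeasA : ∀ S : Finset (Fin m), MeasurableSet (s ⁻¹' {S}) := by
    intro S
    have hset : s ⁻¹' {S} = ⋂ i : Fin m, {ω | X i ω = 1 ↔ i ∈ S} := by
      ext ω
      simp only [Set.mem_preimage, Set.mem_singleton_iff, Set.mem_iInter, Set.mem_setOf_eq,
        Finset.ext_iff, hsmem]
    rw [hset]
    refine MeasurableSet.iInter fun i => ?_
    by_cases hi : i ∈ S
    · simp only [hi, iff_true]
      exact hXmeas i (measurableSet_singleton 1)
    · simp only [hi, iff_false]
      exact (hXmeas i (measurableSet_singleton 1)).compl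
  set q : Finset (Fin m) → ℝ := fun S => (μ (s ⁻¹' {S})).toReal with hqdef
  have hq0 : ∀ S, 0 ≤ q S := fun S => ENNReal.toReal_nonneg
  have hpart : ∀ F : Finset (Finset (Fin m)),
      (μ {ω | s ω ∈ F}).toReal = ∑ S ∈ F, q S := by
    intro F
    have hset : {ω | s ω ∈ F} = ⋃ S ∈ F, s ⁻¹' {S} := by
      ext ω
      simp only [Set.mem_setOf_eq, Set.mem_iUnion, Set.mem_preimage, Set.mem_singleton_iff]
      constructor
      · intro h; exact ⟨s ω, h, rfl⟩
      · rintro ⟨S, hS, rfl⟩; exact hS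
    rw [hset, measure_biUnion_finset ?_ (fun S _ => hmeasA S)]
    · exact ENNReal.toReal_sum fun S _ => measure_ne_top μ _
    · intro S _ T _ hST
      exact Set.disjoint_left.mpr fun ω h1 h2 => hST (h1.symm.trans h2)
  have hcard : ∀ ω, ∑ i, X i ω = ((s ω).card : ℝ) := by
    intro ω
    have : ∀ i ∈ univ, X i ω = if X i ω = 1 then (1:ℝ) else 0 := by
      intro i _; rcases hX01 i ω with h | h <;> simp [h]
    rw [Finset.sum_congr rfl this, Finset.sum_boole, hs]
  have hPr : (μ {ω | a ≤ ∑ i, X i ω}).toReal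
      = ∑ S ∈ univ.filter (fun S => a ≤ (S.card:ℝ)), q S := by
    have : {ω | a ≤ ∑ i, X i ω} = {ω | s ω ∈ univ.filter (fun S => a ≤ (S.card:ℝ))} := by
      ext ω; simp [hcard ω]
    rw [this, hpart]
  have hr : ∀ J : Finset (Fin m),
      (∑ S ∈ univ.filter (fun S => J ⊆ S), q S) ≤ ∏ j ∈ J, p j := by
    intro J
    have heq : {ω | ∀ j ∈ J, X j ω = 1} = {ω | s ω ∈ univ.filter (fun S => J ⊆ S)} := by
      ext ω
      simp only [Set.mem_setOf_eq, Finset.mem_filter, Finset.mem_univ, true_and,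
        Finset.subset_iff, hsmem]
    have h2 := hneg J
    rw [heq, hpart] at h2
    exact h2
  -- key MGF bound
  have key : ∀ lam : ℝ, 0 ≤ lam →
      ∑ S : Finset (Fin m), q S * (lam+1)^S.card ≤ ∏ i, (lam * p i + 1) := by
    intro lam hlam
    have expand : ∀ S : Finset (Fin m),
        (lam+1)^S.card = ∑ J ∈ univ.filter (fun J => J ⊆ S), lam^J.card := by
      intro S
      have h1 := Finset.prod_add (fun _ : Fin m => lam) (fun _ => (1:ℝ)) S
      simp only [Finset.prod_const, Finset.prod_const_one, one_pow, mul_one] at h1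
      have h3 : S.powerset = univ.filter (fun J => J ⊆ S) := by
        ext J; simp
      rw [← h3, ← h1]
    calc ∑ S : Finset (Fin m), q S * (lam+1)^S.card
        = ∑ S : Finset (Fin m), ∑ J : Finset (Fin m),
            if J ⊆ S then q S * lam^J.card else 0 := by
          refine Finset.sum_congr rfl fun S _ => ?_
          rw [expand, Finset.mul_sum, ← Finset.sum_filter]
      _ = ∑ J : Finset (Fin m), ∑ S : Finset (Fin m),
            if J ⊆ S then q S * lam^J.card else 0 := Finset.sum_comm
      _ = ∑ J : Finset (Fin m), lam^J.card * ∑ S ∈ univ.filter (fun S => J ⊆ S), q S := by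
          refine Finset.sum_congr rfl fun J _ => ?_
          rw [Finset.mul_sum, ← Finset.sum_filter]
          exact Finset.sum_congr rfl fun S _ => by ring
      _ ≤ ∑ J : Finset (Fin m), lam^J.card * ∏ j ∈ J, p j :=
          Finset.sum_le_sum fun J _ =>
            mul_le_mul_of_nonneg_left (hr J) (pow_nonneg hlam _)
      _ = ∏ i, (lam * p i + 1) := by
          rw [Finset.prod_add (fun i : Fin m => lam * p i) (fun _ => (1:ℝ)) univ]
          simp only [Finset.prod_const_one, mul_one, Finset.powerset_univ]
          refine Finset.sum_congr rfl fun J _ => ?_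
          rw [Finset.prod_mul_distrib, Finset.prod_const]
  -- AM-GM
  have amgm : ∀ lam : ℝ, 0 ≤ lam →
      ∏ i, (lam * p i + 1) ≤ (((m:ℝ) + lam * mu)/m)^m := by
    intro lam hlam
    have h := amgm_aux (univ : Finset (Fin m)) (univ_nonempty_iff.mpr ⟨⟨0, hm⟩⟩)
      (fun i => lam * p i + 1) (fun i _ => by have := hp0 i; positivity)
    simp only [Finset.card_univ, Fintype.card_fin, Finset.sum_add_distrib,
      Finset.sum_const, nsmul_eq_mul, mul_one, ← Finset.mul_sum] at h
    calc ∏ i, (lam * p i + 1) ≤ ((lam * ∑ i, p i + m)/m)^m := h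
      _ = (((m:ℝ) + lam * mu)/m)^m := by rw [hmu]; ring_nf
  -- Markov
  have markov : ∀ lam : ℝ, 0 ≤ lam →
      (μ {ω | a ≤ ∑ i, X i ω}).toReal * (lam+1) ^ a
        ≤ ∑ S : Finset (Fin m), q S * (lam+1)^S.card := by
    intro lam hlam
    have hc : (1:ℝ) ≤ lam + 1 := by linarith
    rw [hPr, Finset.sum_mul]
    refine le_trans (Finset.sum_le_sum ?_)
      (Finset.sum_le_sum_of_subset_of_nonneg (Finset.filter_subset _ _) ?_)
    · intro S hS
      simp only [Finset.mem_filter] at hS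
      refine mul_le_mul_of_nonneg_left ?_ (hq0 S)
      calc (lam+1) ^ a ≤ (lam+1) ^ (S.card : ℝ) :=
            Real.rpow_le_rpow_of_exponent_le hc hS.2
        _ = (lam+1) ^ S.card := Real.rpow_natCast _ _
    · intro S _ _
      exact mul_nonneg (hq0 S) (pow_nonneg (by linarith) _)
  have bound : ∀ lam : ℝ, 0 ≤ lam →
      (μ {ω | a ≤ ∑ i, X i ω}).toReal * (lam+1) ^ a ≤ (((m:ℝ) + lam * mu)/m)^m :=
    fun lam hlam => ((markov lam hlam).trans (key lam hlam)).trans (amgm lam hlam)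
  by_cases hmu_pos : 0 < mu
  · -- main case
    have ha_pos : 0 < a := lt_of_lt_of_le hmu_pos ha
    set c : ℝ := a * ((m:ℝ) - mu) / (mu * ((m:ℝ) - a)) with hcdef
    have hden : 0 < mu * ((m:ℝ) - a) := by positivity
    have hc1 : 1 ≤ c := by
      rw [hcdef, le_div_iff₀ hden]
      nlinarith
    have hcpos : 0 < c := lt_of_lt_of_le one_pos hc1
    have hb := bound (c - 1) (by linarith)
    rw [show c - 1 + 1 = c by ring] at hb
    have hval : ((m:ℝ) + (c - 1) * mu)/m = ((m:ℝ) - mu)/((m:ℝ) - a) := by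
      rw [hcdef]
      field_simp
      ring
    rw [hval] at hb
    set B : ℝ := ((m:ℝ) - mu)/((m:ℝ) - a) with hBdef
    have hB : 0 < B := by positivity
    have hca : 0 < c ^ a := Real.rpow_pos_of_pos hcpos a
    have hfin : (μ {ω | a ≤ ∑ i, X i ω}).toReal ≤ B ^ m / c ^ a := by
      rw [le_div_iff₀ hca]; exact hb
    refine hfin.trans (le_of_eq ?_)
    have hBc : B / c = mu / a := by
      rw [hBdef, hcdef]
      field_simp
    calc B ^ m / c ^ a = B ^ ((m:ℝ)) / c ^ a := by rw [Real.rpow_natCast]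
      _ = B ^ (((m:ℝ) - a) + a) / c ^ a := by ring_nf
      _ = B ^ ((m:ℝ) - a) * B ^ a / c ^ a := by rw [Real.rpow_add hB]
      _ = B ^ ((m:ℝ) - a) * (B ^ a / c ^ a) := by ring
      _ = B ^ ((m:ℝ) - a) * (B / c) ^ a := by rw [Real.div_rpow hB.le hcpos.le]
      _ = B ^ ((m:ℝ) - a) * (mu / a) ^ a := by rw [hBc]
  · -- mu = 0
    have hmuz : mu = 0 := le_antisymm (not_lt.mp hmu_pos) hmu0
    have hpz : ∀ i, p i = 0 := by
      intro i
      have hsum : ∑ i, p i = 0 := by rw [← hmu]; exact hmuz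
      exact (Finset.sum_eq_zero_iff_of_nonneg (fun i _ => hp0 i)).mp hsum i (Finset.mem_univ i)
    by_cases haz : a = 0
    · subst haz
      rw [hmuz]
      simp only [sub_zero, zero_div, Real.rpow_zero, mul_one]
      rw [div_self (ne_of_gt hmR), Real.one_rpow]
      calc (μ {ω | (0:ℝ) ≤ ∑ i, X i ω}).toReal ≤ (μ Set.univ).toReal :=
            ENNReal.toReal_mono (measure_ne_top μ _) (measure_mono (Set.subset_univ _))
        _ = 1 := by simp
    · have ha_pos : 0 < a := lt_of_le_of_ne ha0 (Ne.symm haz)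
      have hnull : μ {ω | a ≤ ∑ i, X i ω} = 0 := by
        have hsub : {ω | a ≤ ∑ i, X i ω} ⊆ ⋃ i, {ω | X i ω = 1} := by
          intro ω hω
          by_contra hcon
          simp only [Set.mem_iUnion, Set.mem_setOf_eq, not_exists] at hcon
          have : ∑ i, X i ω = 0 := Finset.sum_eq_zero fun i _ =>
            (hX01 i ω).resolve_right (hcon i)
          rw [Set.mem_setOf_eq, this] at hω
          linarith
        refine measure_mono_null hsub (measure_iUnion_null fun i => ?_)
        have h := hp i
        rw [hpz i] at h
        rcases (ENNReal.toReal_eq_zero_iff _).mp h with h0 | h0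
        · exact h0
        · exact absurd h0 (measure_ne_top μ _)
      rw [hnull]
      simp only [ENNReal.toReal_zero]
      rw [hmuz, zero_div, Real.zero_rpow haz, mul_zero]
end

section
/- Let X_1,...,X_m be 0/1 random variables satisfying the downward condition: for every J, Pr[∀j∈J, X_j=0] ≤ Π_{j∈J}(1−p_j) where p_i = Pr[X_i=1]. Let X = Σ X_i, μ = Σ p_i. Then for all a with 0 < a ≤ μ: Pr[X ≤ a] ≤ ((m−μ)/(m−a))^{m−a} · (μ/a)^a. -/
open MeasureTheory ProbabilityTheory Finset

lemma chernoff_key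
    {Ω : Type*} [MeasurableSpace Ω]
    (μ : Measure Ω) [IsProbabilityMeasure μ]
    (m : ℕ) (X : Fin m → Ω → ℝ)
    (hX01 : ∀ i ω, X i ω = 0 ∨ X i ω = 1)
    (hXmeas : ∀ i, Measurable (X i))
    (p : Fin m → ℝ)
    (hneg : ∀ J : Finset (Fin m),
      (μ {ω | ∀ j ∈ J, X j ω = 0}).toReal ≤ ∏ j ∈ J, (1 - p j))
    (s : ℝ) (hs0 : 0 < s) (hs1 : s ≤ 1) (a : ℝ) :
    (μ {ω | ∑ i, X i ω ≤ a}).toReal * s ^ a ≤ ∏ i, ((1 - s) * (1 - p i) + s) := by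
  classical
  set E : Set Ω := {ω | ∑ i, X i ω ≤ a} with hEdef
  set g : Ω → ℝ := fun ω => ∏ i, ((1 - s) * (1 - X i ω) + s) with hgdef
  have hfac01 : ∀ i ω, (1 - s) * (1 - X i ω) + s = 1 ∨ (1 - s) * (1 - X i ω) + s = s := by
    intro i ω
    rcases hX01 i ω with h | h <;> rw [h] <;> [left; right] <;> ring
  have hfac_nonneg : ∀ i ω, 0 ≤ (1 - s) * (1 - X i ω) + s := by
    intro i ω; rcases hfac01 i ω with h | h <;> rw [h] <;> linarith
  have hfac_le1 : ∀ i ω, (1 - s) * (1 - X i ω) + s ≤ 1 := by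
    intro i ω; rcases hfac01 i ω with h | h <;> rw [h] <;> linarith
  have hg0 : ∀ ω, 0 ≤ g ω := fun ω => Finset.prod_nonneg fun i _ => hfac_nonneg i ω
  have hg1 : ∀ ω, g ω ≤ 1 := fun ω =>
    Finset.prod_le_one (fun i _ => hfac_nonneg i ω) (fun i _ => hfac_le1 i ω)
  have hgmeas : Measurable g :=
    Finset.measurable_prod _ fun i _ => (((hXmeas i).const_sub 1).const_mul _).add_const _
  have hgint : Integrable g μ := by
    refine (integrable_const (1 : ℝ)).mono' hgmeas.aestronglyMeasurable ?_
    exact ae_of_all _ fun ω => by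
      rw [Real.norm_eq_abs, abs_of_nonneg (hg0 ω)]; exact hg1 ω
  have hEmeas : MeasurableSet E :=
    measurableSet_le (Finset.measurable_sum _ fun i _ => hXmeas i) measurable_const
  -- g ω = s ^ (∑ X i ω)
  have hgpow : ∀ ω, g ω = s ^ (∑ i, X i ω) := by
    intro ω
    have hfac : ∀ i, (1 - s) * (1 - X i ω) + s = s ^ (X i ω) := by
      intro i
      rcases hX01 i ω with h | h <;> rw [h] <;> simp <;> ring
    rw [hgdef]
    simp only [hfac]
    induction (univ : Finset (Fin m)) using Finset.induction with
    | empty => simp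
    | insert _ _ hnotmem ih =>
        rw [Finset.prod_insert hnotmem, Finset.sum_insert hnotmem,
          Real.rpow_add hs0, ih]
  -- Markov step
  have hmarkov : (μ E).toReal * s ^ a ≤ ∫ ω, g ω ∂μ := by
    have heq : (μ E).toReal * s ^ a = ∫ ω, E.indicator (fun _ => s ^ a) ω ∂μ := by
      rw [integral_indicator_const _ hEmeas, smul_eq_mul]; rfl
    rw [heq]
    refine integral_mono ((integrable_const _).indicator hEmeas) hgint ?_
    intro ω
    by_cases hω : ω ∈ E
    · rw [Set.indicator_of_mem hω, hgpow ω]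
      exact Real.rpow_le_rpow_of_exponent_ge hs0 hs1 hω
    · rw [Set.indicator_of_notMem hω]; exact hg0 ω
  -- expansion
  set Y : Finset (Fin m) → Ω → ℝ := fun t ω => ∏ j ∈ t, (1 - X j ω) with hYdef
  have hY_ind : ∀ t : Finset (Fin m),
      Y t = ({ω | ∀ j ∈ t, X j ω = 0} : Set Ω).indicator 1 := by
    intro t
    funext ω
    by_cases hω : ∀ j ∈ t, X j ω = 0
    · rw [Set.indicator_of_mem (show ω ∈ {ω | ∀ j ∈ t, X j ω = 0} from hω)]
      simp only [Pi.one_apply, hYdef]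
      exact Finset.prod_eq_one fun j hj => by rw [hω j hj]; ring
    · rw [Set.indicator_of_notMem (show ω ∉ {ω | ∀ j ∈ t, X j ω = 0} from hω)]
      push_neg at hω
      obtain ⟨j, hjt, hj⟩ := hω
      have hj1 : X j ω = 1 := (hX01 j ω).resolve_left hj
      exact Finset.prod_eq_zero hjt (by rw [hj1]; ring)
  have hA_meas : ∀ t : Finset (Fin m), MeasurableSet {ω | ∀ j ∈ t, X j ω = 0} := by
    intro t
    have : {ω | ∀ j ∈ t, X j ω = 0} = ⋂ j ∈ t, X j ⁻¹' {0} := by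
      ext ω; simp [Set.mem_iInter]
    rw [this]
    exact MeasurableSet.biInter t.countable_toSet fun j _ =>
      hXmeas j (measurableSet_singleton 0)
  have hY_int : ∀ t : Finset (Fin m), Integrable (Y t) μ := by
    intro t
    rw [hY_ind t]
    exact (integrable_const (1 : ℝ)).indicator (hA_meas t)
  have hY_integral : ∀ t : Finset (Fin m),
      ∫ ω, Y t ω ∂μ = (μ {ω | ∀ j ∈ t, X j ω = 0}).toReal := by
    intro t
    rw [hY_ind t]
    exact integral_indicator_one (hA_meas t)
  have hgexp : ∀ ω, g ω = ∑ t ∈ (univ : Finset (Fin m)).powerset,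
      ((1 - s) ^ t.card * s ^ (univ \ t).card) * Y t ω := by
    intro ω
    show ∏ i : Fin m, ((1 - s) * (1 - X i ω) + s) = _
    rw [show (fun i : Fin m => (1 - s) * (1 - X i ω) + s) = fun i => ((1-s)*(1 - X i ω)) + s from rfl, Finset.prod_add]
    refine Finset.sum_congr rfl fun t _ => ?_
    rw [Finset.prod_const, Finset.prod_mul_distrib, Finset.prod_const]
    ring
  have hint : ∫ ω, g ω ∂μ = ∑ t ∈ (univ : Finset (Fin m)).powerset,
      ((1 - s) ^ t.card * s ^ (univ \ t).card) * (μ {ω | ∀ j ∈ t, X j ω = 0}).toReal := by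
    calc ∫ ω, g ω ∂μ
        = ∫ ω, ∑ t ∈ (univ : Finset (Fin m)).powerset,
            ((1 - s) ^ t.card * s ^ (univ \ t).card) * Y t ω ∂μ := by
          exact integral_congr_ae (ae_of_all _ hgexp)
      _ = ∑ t ∈ (univ : Finset (Fin m)).powerset,
            ∫ ω, ((1 - s) ^ t.card * s ^ (univ \ t).card) * Y t ω ∂μ :=
          integral_finset_sum _ fun t _ => (hY_int t).const_mul _
      _ = _ := by
          refine Finset.sum_congr rfl fun t _ => ?_
          rw [integral_const_mul, hY_integral t]
  have hbound : ∑ t ∈ (univ : Finset (Fin m)).powerset,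
      ((1 - s) ^ t.card * s ^ (univ \ t).card) * (μ {ω | ∀ j ∈ t, X j ω = 0}).toReal
      ≤ ∏ i, ((1 - s) * (1 - p i) + s) := by
    rw [Finset.prod_add]
    refine Finset.sum_le_sum fun t _ => ?_
    have hc : 0 ≤ (1 - s) ^ t.card * s ^ (univ \ t).card :=
      mul_nonneg (pow_nonneg (by linarith) _) (pow_nonneg hs0.le _)
    calc ((1 - s) ^ t.card * s ^ (univ \ t).card) * (μ {ω | ∀ j ∈ t, X j ω = 0}).toReal
        ≤ ((1 - s) ^ t.card * s ^ (univ \ t).card) * ∏ j ∈ t, (1 - p j) :=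
          mul_le_mul_of_nonneg_left (hneg t) hc
      _ = (∏ i ∈ t, (1 - s) * (1 - p i)) * ∏ i ∈ univ \ t, s := by
          rw [Finset.prod_const, Finset.prod_mul_distrib, Finset.prod_const]; ring
  calc (μ E).toReal * s ^ a ≤ ∫ ω, g ω ∂μ := hmarkov
    _ = _ := hint
    _ ≤ _ := hbound

theorem neg_corr_chernoff_lower_tail
    {Ω : Type*} [MeasurableSpace Ω]
    (μ : Measure Ω) [IsProbabilityMeasure μ]
    (m : ℕ) (X : Fin m → Ω → ℝ)
    (hX01 : ∀ i ω, X i ω = 0 ∨ X i ω = 1)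
    (hXmeas : ∀ i, Measurable (X i))
    (p : Fin m → ℝ) (hp : ∀ i, (μ {ω | X i ω = 1}).toReal = p i)
    (hneg : ∀ J : Finset (Fin m),
      (μ {ω | ∀ j ∈ J, X j ω = 0}).toReal ≤ ∏ j ∈ J, (1 - p j))
    (mu : ℝ) (hmu : mu = ∑ i, p i)
    (a : ℝ) (ha0 : 0 < a) (ha : a ≤ mu) :
    (μ {ω | ∑ i, X i ω ≤ a}).toReal ≤
      (((m : ℝ) - mu) / ((m : ℝ) - a)) ^ ((m : ℝ) - a) * (mu / a) ^ a := by
  classical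
  have hp1 : ∀ i, p i ≤ 1 := by
    intro i
    rw [← hp i]
    exact ENNReal.toReal_le_of_le_ofReal zero_le_one (by simpa using prob_le_one)
  have hp0 : ∀ i, 0 ≤ p i := fun i => (hp i) ▸ ENNReal.toReal_nonneg
  have hmum : mu ≤ m := by
    rw [hmu]
    calc ∑ i, p i ≤ ∑ _i : Fin m, (1:ℝ) := Finset.sum_le_sum fun i _ => hp1 i
      _ = m := by simp
  have hmu0 : 0 < mu := lt_of_lt_of_le ha0 ha
  rcases eq_or_lt_of_le hmum with hcase | hcase
  · -- mu = m
    rcases eq_or_lt_of_le (ha.trans hmum) with hacase | hacase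
    · -- a = m : RHS = 1
      rw [hacase, hcase]
      have hmne : ((m:ℝ)) ≠ 0 := by rw [← hcase]; exact hmu0.ne'
      simp only [sub_self, zero_div, Real.rpow_zero, div_self hmne, Real.one_rpow, one_mul]
      exact ENNReal.toReal_le_of_le_ofReal zero_le_one (by simpa using prob_le_one)
    · -- a < m : LHS = 0
      have hpall : ∀ i : Fin m, p i = 1 := by
        have hsum : ∑ i, p i = ∑ _i : Fin m, (1:ℝ) := by
          rw [← hmu, hcase]; simp
        intro i
        exact (Finset.sum_eq_sum_iff_of_le fun i _ => hp1 i).mp hsum i (mem_univ i)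
      have hzero : ∀ i : Fin m, μ {ω | X i ω = 0} = 0 := by
        intro i
        have h := hneg {i}
        simp only [Finset.mem_singleton, Finset.prod_singleton, hpall i, sub_self] at h
        have h2 : (μ {ω | ∀ j, j = i → X j ω = 0}).toReal = 0 :=
          le_antisymm h ENNReal.toReal_nonneg
        have h3 : μ {ω | ∀ j, j = i → X j ω = 0} = 0 := by
          rwa [ENNReal.toReal_eq_zero_iff, or_iff_left (measure_ne_top μ _)] at h2
        refine measure_mono_null ?_ h3
        intro ω hω j hj
        subst hj; exact hω
      have hsub : {ω | ∑ i, X i ω ≤ a} ⊆ ⋃ i, {ω | X i ω = 0} := by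
        intro ω hω
        by_contra hc
        simp only [Set.mem_iUnion, Set.mem_setOf_eq, not_exists] at hc
        have hall : ∀ i, X i ω = 1 := fun i => (hX01 i ω).resolve_left (hc i)
        have : ∑ i, X i ω = m := by simp [hall]
        rw [Set.mem_setOf_eq, this] at hω
        linarith
      have hLHS : μ {ω | ∑ i, X i ω ≤ a} = 0 := by
        refine measure_mono_null hsub ?_
        refine le_antisymm ((measure_iUnion_le _).trans ?_) zero_le
        simp [hzero]
      rw [hLHS]
      simp only [ENNReal.toReal_zero]
      have h1 : (0:ℝ) ≤ (((m : ℝ) - mu) / ((m : ℝ) - a)) ^ ((m : ℝ) - a) :=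
        Real.rpow_nonneg (div_nonneg (by linarith) (by linarith)) _
      have h2 : (0:ℝ) ≤ (mu / a) ^ a :=
        Real.rpow_nonneg (div_nonneg hmu0.le ha0.le) _
      positivity
  · -- mu < m : main case
    have ham : a < (m:ℝ) := lt_of_le_of_lt ha hcase
    set B : ℝ := ((m:ℝ) - mu) / ((m:ℝ) - a) with hBdef
    have hB0 : 0 < B := div_pos (by linarith) (by linarith)
    set s : ℝ := a * ((m:ℝ) - mu) / (mu * ((m:ℝ) - a)) with hsdef
    have hs0 : 0 < s := div_pos (by nlinarith) (by nlinarith)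
    have hs1 : s ≤ 1 := by
      rw [div_le_one (by nlinarith)]
      nlinarith
    have hm0 : 0 < (m:ℝ) := lt_trans ha0 ham
    have key := chernoff_key μ m X hX01 hXmeas p hneg s hs0 hs1 a
    -- rewrite product
    have hprodeq : ∏ i, ((1 - s) * (1 - p i) + s) = ∏ i, (1 - (1 - s) * p i) :=
      Finset.prod_congr rfl fun i _ => by ring
    -- AM-GM
    have hz : ∀ i : Fin m, 0 ≤ 1 - (1 - s) * p i := by
      intro i
      have : (1 - s) * p i ≤ 1 * 1 :=
        mul_le_mul (by linarith) (hp1 i) (hp0 i) zero_le_one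
      linarith
    have hsumz : ∑ i, ((m:ℝ)⁻¹ * (1 - (1 - s) * p i)) = ((m:ℝ) - (1 - s) * mu) / m := by
      rw [← Finset.mul_sum, Finset.sum_sub_distrib, Finset.sum_const, ← Finset.mul_sum,
        ← hmu]
      simp only [Finset.card_univ, Fintype.card_fin, nsmul_eq_mul, mul_one]
      field_simp
    have hAM : ∏ i, (1 - (1 - s) * p i) ≤ (((m:ℝ) - (1 - s) * mu) / m) ^ (m:ℕ) := by
      have hw := Real.geom_mean_le_arith_mean_weighted univ (fun _ : Fin m => (m:ℝ)⁻¹)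
        (fun i => 1 - (1 - s) * p i) (fun i _ => by positivity)
        (by simp [Finset.card_univ, mul_inv_cancel₀ hm0.ne']) (fun i _ => hz i)
      rw [hsumz] at hw
      have hLnn : 0 ≤ ∏ i, (1 - (1 - s) * p i) ^ ((m:ℝ)⁻¹) :=
        Finset.prod_nonneg fun i _ => Real.rpow_nonneg (hz i) _
      have := pow_le_pow_left₀ hLnn hw m
      calc ∏ i, (1 - (1 - s) * p i)
          = (∏ i, (1 - (1 - s) * p i) ^ ((m:ℝ)⁻¹)) ^ (m:ℕ) := by
            rw [← Finset.prod_pow]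
            refine Finset.prod_congr rfl fun i _ => ?_
            rw [← Real.rpow_natCast ((1 - (1 - s) * p i) ^ ((m:ℝ)⁻¹)) m,
              ← Real.rpow_mul (hz i), inv_mul_cancel₀ hm0.ne', Real.rpow_one]
        _ ≤ _ := this
    have hABm : ((m:ℝ) - (1 - s) * mu) / m = B := by
      have hma : (m:ℝ) - a ≠ 0 := sub_ne_zero.mpr ham.ne'
      have hmune : mu ≠ 0 := hmu0.ne'
      have h2 : s * mu * ((m:ℝ) - a) = a * ((m:ℝ) - mu) := by
        rw [hsdef]; field_simp
      rw [hBdef, div_eq_div_iff hm0.ne' hma]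
      linear_combination h2
    have hkey2 : (μ {ω | ∑ i, X i ω ≤ a}).toReal * s ^ a ≤ B ^ (m:ℕ) := by
      calc (μ {ω | ∑ i, X i ω ≤ a}).toReal * s ^ a
          ≤ ∏ i, ((1 - s) * (1 - p i) + s) := key
        _ = ∏ i, (1 - (1 - s) * p i) := hprodeq
        _ ≤ (((m:ℝ) - (1 - s) * mu) / m) ^ (m:ℕ) := hAM
        _ = B ^ (m:ℕ) := by rw [hABm]
    -- finish: divide by s ^ a
    have hsa : 0 < s ^ a := Real.rpow_pos_of_pos hs0 _
    have hfinal : B ^ (m:ℕ) / s ^ a = B ^ ((m:ℝ) - a) * (mu / a) ^ a := by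
      have hseq : s = (a / mu) * B := by
        rw [hsdef, hBdef, div_mul_div_comm]
      have hsa_eq : s ^ a = (a / mu) ^ a * B ^ a := by
        rw [hseq, Real.mul_rpow (div_nonneg ha0.le hmu0.le) hB0.le]
      have hmua : (mu / a) ^ a = ((a / mu) ^ a)⁻¹ := by
        rw [← Real.inv_rpow (div_nonneg ha0.le hmu0.le), inv_div]
      have hBa : B ^ ((m:ℝ) - a) = B ^ (m:ℝ) / B ^ a := Real.rpow_sub hB0 _ _
      rw [← Real.rpow_natCast B m, hsa_eq, hmua, hBa]
      have h1 : ((a / mu) ^ a) ≠ 0 := (Real.rpow_pos_of_pos (div_pos ha0 hmu0) a).ne'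
      have h2 : (B ^ a) ≠ 0 := (Real.rpow_pos_of_pos hB0 a).ne'
      field_simp
    calc (μ {ω | ∑ i, X i ω ≤ a}).toReal
        = (μ {ω | ∑ i, X i ω ≤ a}).toReal * s ^ a / s ^ a := by
          field_simp
      _ ≤ B ^ (m:ℕ) / s ^ a := div_le_div_of_nonneg_right hkey2 hsa.le
      _ = B ^ ((m:ℝ) - a) * (mu / a) ^ a := hfinal
end

section
/- Consider a two-stage sampling process: stage 0 produces random subset S₀ ⊆ [n]; stage 1, given S₀, includes each surviving item i ∈ S₀ independently-in-distribution with consistent conditional probability p¹_i (i.e., Pr[i ∈ S | S₀] = p¹_i whenever i ∈ S₀, independent of which other items are in S₀). If stage 0 satisfies Pr[J ⊆ S₀] ≤ Π_{j∈J} Pr[j ∈ S₀] for all J, and stage 1 conditionally satisfies Pr[J ⊆ S | S₀] ≤ Π_{j∈J} p¹_j for all J ⊆ S₀, then the composed sample satisfies Pr[J ⊆ S] ≤ Π_{j∈J} Pr[j ∈ S], where Pr[j ∈ S] = Pr[j ∈ S₀]·p¹_j. -/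
open MeasureTheory ProbabilityTheory Finset

theorem two_stage_consistent_inclusion_bound
    {Ω : Type*} [MeasureSpace Ω] [IsProbabilityMeasure (ℙ : Measure Ω)]
    (n : ℕ) (S₀ S : Ω → Finset (Fin n))
    (hmeas₀ : ∀ A : Finset (Fin n), MeasurableSet {ω | S₀ ω = A})
    (hmeas : ∀ i : Fin n, MeasurableSet {ω | i ∈ S ω})
    (hsub : ∀ ω, S ω ⊆ S₀ ω)
    (p1 : Fin n → ℝ)
    -- consistency: conditional survival probability of i at stage 1 is p1 i,
    -- independent of the realization of S₀
    (hconsist : ∀ A : Finset (Fin n), ℙ {ω | S₀ ω = A} ≠ 0 → ∀ i ∈ A,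
      ((ℙ[|{ω | S₀ ω = A}]) {ω | i ∈ S ω}).toReal = p1 i)
    -- stage 1 conditionally satisfies the inclusion bound
    (hstage1 : ∀ A : Finset (Fin n), ℙ {ω | S₀ ω = A} ≠ 0 → ∀ J ⊆ A,
      ((ℙ[|{ω | S₀ ω = A}]) {ω | ∀ j ∈ J, j ∈ S ω}).toReal ≤ ∏ j ∈ J, p1 j)
    -- stage 0 satisfies the inclusion bound
    (hstage0 : ∀ J : Finset (Fin n),
      (ℙ {ω | ∀ j ∈ J, j ∈ S₀ ω}).toReal ≤ ∏ j ∈ J, (ℙ {ω | j ∈ S₀ ω}).toReal) :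
    (∀ j : Fin n, (ℙ {ω | j ∈ S ω}).toReal = (ℙ {ω | j ∈ S₀ ω}).toReal * p1 j) ∧
    (∀ J : Finset (Fin n),
      (ℙ {ω | ∀ j ∈ J, j ∈ S ω}).toReal ≤ ∏ j ∈ J, (ℙ {ω | j ∈ S ω}).toReal) := by
  classical
  -- decomposition over the values of S₀
  have hdecomp : ∀ (E : Set Ω), MeasurableSet E →
      (ℙ E).toReal = ∑ A : Finset (Fin n), (ℙ ({ω | S₀ ω = A} ∩ E)).toReal := by
    intro E hE
    have hcover : (⋃ A ∈ (Finset.univ : Finset (Finset (Fin n))),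
        ({ω | S₀ ω = A} ∩ E)) = E := by
      ext ω; simp
    have := measure_biUnion_finset (μ := (ℙ : Measure Ω))
      (s := (Finset.univ : Finset (Finset (Fin n))))
      (f := fun A => {ω | S₀ ω = A} ∩ E)
      (by
        intro A _ B _ hAB
        simp only [Set.disjoint_left]
        rintro ω ⟨h1, _⟩ ⟨h2, _⟩
        exact hAB (h1.symm.trans h2))
      (by intro A _; exact (hmeas₀ A).inter hE)
    rw [hcover] at this
    rw [this, ENNReal.toReal_sum (fun A _ => measure_ne_top _ _)]
  -- key conditional-probability identity
  have key : ∀ (A : Finset (Fin n)) (t : Set Ω), ℙ {ω | S₀ ω = A} ≠ 0 →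
      (ℙ ({ω | S₀ ω = A} ∩ t)).toReal
        = (ℙ {ω | S₀ ω = A}).toReal * ((ℙ[|{ω | S₀ ω = A}]) t).toReal := by
    intro A t h0
    rw [cond_apply (hmeas₀ A), ENNReal.toReal_mul, ENNReal.toReal_inv]
    have hc : (ℙ {ω | S₀ ω = A}).toReal ≠ 0 := by
      simp [ENNReal.toReal_ne_zero, h0, measure_ne_top]
    field_simp
  have hzero : ∀ (A : Finset (Fin n)) (t : Set Ω), ℙ {ω | S₀ ω = A} = 0 →
      (ℙ ({ω | S₀ ω = A} ∩ t)).toReal = 0 := by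
    intro A t h0
    have : ℙ ({ω | S₀ ω = A} ∩ t) = 0 :=
      le_antisymm (le_trans (measure_mono Set.inter_subset_left) h0.le) (zero_le)
    simp [this]
  -- Part 1
  have part1 : ∀ j : Fin n,
      (ℙ {ω | j ∈ S ω}).toReal = (ℙ {ω | j ∈ S₀ ω}).toReal * p1 j := by
    intro j
    have hS0j : MeasurableSet {ω | j ∈ S₀ ω} := by
      have : {ω | j ∈ S₀ ω} = ⋃ (A : Finset (Fin n)) (_ : j ∈ A), {ω | S₀ ω = A} := by
        ext ω; simp
      rw [this]
      exact MeasurableSet.iUnion fun A => MeasurableSet.iUnion fun _ => hmeas₀ A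
    have term1 : ∀ A : Finset (Fin n),
        (ℙ ({ω | S₀ ω = A} ∩ {ω | j ∈ S ω})).toReal
          = (if j ∈ A then (ℙ {ω | S₀ ω = A}).toReal else 0) * p1 j := by
      intro A
      by_cases hjA : j ∈ A
      · simp only [hjA, if_true]
        by_cases h0 : ℙ {ω | S₀ ω = A} = 0
        · rw [hzero A _ h0]; simp [ENNReal.toReal_eq_zero_iff, h0]
        · rw [key A _ h0, hconsist A h0 j hjA]
      · have hempty : {ω | S₀ ω = A} ∩ {ω | j ∈ S ω} = ∅ := by
          ext ω
          simp only [Set.mem_inter_iff, Set.mem_setOf_eq, Set.mem_empty_iff_false, iff_false,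
            not_and]
          intro h1 h2
          exact hjA (h1 ▸ hsub ω h2)
        simp [hempty, hjA]
    have term0 : ∀ A : Finset (Fin n),
        (ℙ ({ω | S₀ ω = A} ∩ {ω | j ∈ S₀ ω})).toReal
          = (if j ∈ A then (ℙ {ω | S₀ ω = A}).toReal else 0) := by
      intro A
      by_cases hjA : j ∈ A
      · have : {ω | S₀ ω = A} ∩ {ω | j ∈ S₀ ω} = {ω | S₀ ω = A} := by
          ext ω
          simp only [Set.mem_inter_iff, Set.mem_setOf_eq, and_iff_left_iff_imp]
          intro h1; rw [h1]; exact hjA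
        simp [this, hjA]
      · have : {ω | S₀ ω = A} ∩ {ω | j ∈ S₀ ω} = ∅ := by
          ext ω
          simp only [Set.mem_inter_iff, Set.mem_setOf_eq, Set.mem_empty_iff_false, iff_false,
            not_and]
          intro h1 h2
          exact hjA (h1 ▸ h2)
        simp [this, hjA]
    rw [hdecomp _ (hmeas j), hdecomp _ hS0j]
    simp_rw [term1, term0, ← Finset.sum_mul]
  refine ⟨part1, fun J => ?_⟩
  -- Part 2
  have hTmeas : MeasurableSet {ω | ∀ j ∈ J, j ∈ S ω} := by
    have : {ω | ∀ j ∈ J, j ∈ S ω} = ⋂ j ∈ (J : Set (Fin n)), {ω | j ∈ S ω} := by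
      ext ω; simp
    rw [this]
    exact MeasurableSet.biInter (Set.to_countable _) fun j _ => hmeas j
  have hT0meas : MeasurableSet {ω | ∀ j ∈ J, j ∈ S₀ ω} := by
    have h1 : ∀ j : Fin n, MeasurableSet {ω | j ∈ S₀ ω} := by
      intro j
      have : {ω | j ∈ S₀ ω} = ⋃ (A : Finset (Fin n)) (_ : j ∈ A), {ω | S₀ ω = A} := by
        ext ω; simp
      rw [this]
      exact MeasurableSet.iUnion fun A => MeasurableSet.iUnion fun _ => hmeas₀ A
    have : {ω | ∀ j ∈ J, j ∈ S₀ ω} = ⋂ j ∈ (J : Set (Fin n)), {ω | j ∈ S₀ ω} := by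
      ext ω; simp
    rw [this]
    exact MeasurableSet.biInter (Set.to_countable _) fun j _ => h1 j
  have term2 : ∀ A : Finset (Fin n),
      (ℙ ({ω | S₀ ω = A} ∩ {ω | ∀ j ∈ J, j ∈ S ω})).toReal
        ≤ (if J ⊆ A then (ℙ {ω | S₀ ω = A}).toReal else 0) * ∏ j ∈ J, p1 j := by
    intro A
    by_cases hJA : J ⊆ A
    · simp only [hJA, if_true]
      by_cases h0 : ℙ {ω | S₀ ω = A} = 0
      · rw [hzero A _ h0]
        simp [ENNReal.toReal_eq_zero_iff, h0]
      · rw [key A _ h0]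
        exact mul_le_mul_of_nonneg_left (hstage1 A h0 J hJA) ENNReal.toReal_nonneg
    · obtain ⟨j, hjJ, hjA⟩ := Finset.not_subset.mp hJA
      have hempty : {ω | S₀ ω = A} ∩ {ω | ∀ j ∈ J, j ∈ S ω} = ∅ := by
        ext ω
        simp only [Set.mem_inter_iff, Set.mem_setOf_eq, Set.mem_empty_iff_false, iff_false,
          not_and]
        intro h1 h2
        exact hjA (h1 ▸ hsub ω (h2 j hjJ))
      simp [hempty, hJA]
  have term20 : ∀ A : Finset (Fin n),
      (ℙ ({ω | S₀ ω = A} ∩ {ω | ∀ j ∈ J, j ∈ S₀ ω})).toReal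
        = (if J ⊆ A then (ℙ {ω | S₀ ω = A}).toReal else 0) := by
    intro A
    by_cases hJA : J ⊆ A
    · have : {ω | S₀ ω = A} ∩ {ω | ∀ j ∈ J, j ∈ S₀ ω} = {ω | S₀ ω = A} := by
        ext ω
        simp only [Set.mem_inter_iff, Set.mem_setOf_eq, and_iff_left_iff_imp]
        intro h1 j hj; rw [h1]; exact hJA hj
      simp [this, hJA]
    · obtain ⟨j, hjJ, hjA⟩ := Finset.not_subset.mp hJA
      have : {ω | S₀ ω = A} ∩ {ω | ∀ j ∈ J, j ∈ S₀ ω} = ∅ := by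
        ext ω
        simp only [Set.mem_inter_iff, Set.mem_setOf_eq, Set.mem_empty_iff_false, iff_false,
          not_and]
        intro h1 h2
        exact hjA (h1 ▸ h2 j hjJ)
      simp [this, hJA]
  have hmain : (ℙ {ω | ∀ j ∈ J, j ∈ S ω}).toReal
      ≤ (ℙ {ω | ∀ j ∈ J, j ∈ S₀ ω}).toReal * ∏ j ∈ J, p1 j := by
    rw [hdecomp _ hTmeas, hdecomp _ hT0meas]
    calc ∑ A : Finset (Fin n), (ℙ ({ω | S₀ ω = A} ∩ {ω | ∀ j ∈ J, j ∈ S ω})).toReal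
        ≤ ∑ A : Finset (Fin n),
            (if J ⊆ A then (ℙ {ω | S₀ ω = A}).toReal else 0) * ∏ j ∈ J, p1 j :=
          Finset.sum_le_sum fun A _ => term2 A
      _ = (∑ A : Finset (Fin n),
            (ℙ ({ω | S₀ ω = A} ∩ {ω | ∀ j ∈ J, j ∈ S₀ ω})).toReal) * ∏ j ∈ J, p1 j := by
          simp_rw [term20, ← Finset.sum_mul]
  have hprodS : ∏ j ∈ J, (ℙ {ω | j ∈ S ω}).toReal
      = (∏ j ∈ J, (ℙ {ω | j ∈ S₀ ω}).toReal) * ∏ j ∈ J, p1 j := by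
    rw [← Finset.prod_mul_distrib]
    exact Finset.prod_congr rfl fun j _ => part1 j
  rcases le_or_gt 0 (∏ j ∈ J, p1 j) with hp | hp
  · calc (ℙ {ω | ∀ j ∈ J, j ∈ S ω}).toReal
        ≤ (ℙ {ω | ∀ j ∈ J, j ∈ S₀ ω}).toReal * ∏ j ∈ J, p1 j := hmain
      _ ≤ (∏ j ∈ J, (ℙ {ω | j ∈ S₀ ω}).toReal) * ∏ j ∈ J, p1 j :=
          mul_le_mul_of_nonneg_right (hstage0 J) hp
      _ = ∏ j ∈ J, (ℙ {ω | j ∈ S ω}).toReal := hprodS.symm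
  · calc (ℙ {ω | ∀ j ∈ J, j ∈ S ω}).toReal
        ≤ (ℙ {ω | ∀ j ∈ J, j ∈ S₀ ω}).toReal * ∏ j ∈ J, p1 j := hmain
      _ ≤ 0 := mul_nonpos_of_nonneg_of_nonpos ENNReal.toReal_nonneg hp.le
      _ ≤ ∏ j ∈ J, (ℙ {ω | j ∈ S ω}).toReal :=
          Finset.prod_nonneg fun j _ => ENNReal.toReal_nonneg
end

section
/- In the two-stage consistent sampling setting: if stage 0 satisfies the exclusion bound Pr[J ∩ S₀ = ∅] ≤ Π_{j∈J} q⁰_j for all J (where q⁰_j = Pr[j ∉ S₀]) and stage 1 conditionally satisfies Pr[J' ∩ S = ∅ | S₀] ≤ Π_{j∈J'} q¹_j for all J' ⊆ S₀ (where q¹_j = 1 − p¹_j is the consistent conditional exclusion probability), then the composed sample satisfies Pr[J ∩ S = ∅] ≤ Π_{j∈J} q[j], where q[j] = q⁰_j + p⁰_j·q¹_j is the overall exclusion probability of item j. -/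
open MeasureTheory ProbabilityTheory Finset

theorem two_stage_consistent_exclusion_bound
    {Ω : Type*} [MeasureSpace Ω] [IsProbabilityMeasure (ℙ : Measure Ω)]
    (n : ℕ) (S₀ S : Ω → Finset (Fin n))
    (hmeas₀ : ∀ A : Finset (Fin n), MeasurableSet {ω | S₀ ω = A})
    (hmeas : ∀ i : Fin n, MeasurableSet {ω | i ∈ S ω})
    (hsub : ∀ ω, S ω ⊆ S₀ ω)
    (p1 : Fin n → ℝ) (hp1 : ∀ i, 0 ≤ p1 i ∧ p1 i ≤ 1)
    -- consistency: conditional survival probability of i at stage 1 is p1 i,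
    -- independent of the realization of S₀
    (hconsist : ∀ A : Finset (Fin n), ℙ {ω | S₀ ω = A} ≠ 0 → ∀ i ∈ A,
      ((ℙ[|{ω | S₀ ω = A}]) {ω | i ∈ S ω}).toReal = p1 i)
    -- stage 1 conditionally satisfies the exclusion bound with q1 j = 1 - p1 j
    (hstage1 : ∀ A : Finset (Fin n), ℙ {ω | S₀ ω = A} ≠ 0 → ∀ J ⊆ A,
      ((ℙ[|{ω | S₀ ω = A}]) {ω | ∀ j ∈ J, j ∉ S ω}).toReal ≤ ∏ j ∈ J, (1 - p1 j))
    -- stage 0 satisfies the exclusion bound with q0 j = Pr[j ∉ S₀]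
    (hstage0 : ∀ J : Finset (Fin n),
      (ℙ {ω | ∀ j ∈ J, j ∉ S₀ ω}).toReal ≤ ∏ j ∈ J, (ℙ {ω | j ∉ S₀ ω}).toReal) :
    ∀ J : Finset (Fin n),
      (ℙ {ω | ∀ j ∈ J, j ∉ S ω}).toReal ≤
        ∏ j ∈ J, ((ℙ {ω | j ∉ S₀ ω}).toReal
          + (ℙ {ω | j ∈ S₀ ω}).toReal * (1 - p1 j)) := by
  classical
  intro J
  set E : Finset (Fin n) → Set Ω := fun A => {ω | S₀ ω = A} with hE
  -- decomposition of any measurable set's probability over values of S₀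
  have hdecomp : ∀ T : Set Ω, MeasurableSet T →
      (ℙ T).toReal = ∑ A : Finset (Fin n), (ℙ (T ∩ E A)).toReal := by
    intro T hT
    have hU : T = ⋃ A ∈ (Finset.univ : Finset (Finset (Fin n))), T ∩ E A := by
      ext ω
      simp only [Set.mem_iUnion, Set.mem_inter_iff, Finset.mem_univ, exists_prop,
        true_and, hE, Set.mem_setOf_eq]
      exact ⟨fun h => ⟨S₀ ω, h, rfl⟩, fun ⟨A, h, _⟩ => h⟩
    have h1 : ℙ T = ∑ A : Finset (Fin n), ℙ (T ∩ E A) := by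
      conv_lhs => rw [hU]
      apply measure_biUnion_finset
      · intro A _ B _ hAB
        apply Set.disjoint_left.mpr
        rintro ω ⟨_, hA⟩ ⟨_, hB⟩
        exact hAB (hA ▸ hB ▸ rfl)
      · exact fun A _ => hT.inter (hmeas₀ A)
    rw [h1, ENNReal.toReal_sum (fun A _ => measure_ne_top _ _)]
  have hq1nn : ∀ j, (0:ℝ) ≤ 1 - p1 j := fun j => by linarith [(hp1 j).2]
  -- measurability of exclusion events
  have hexclS : MeasurableSet {ω | ∀ j ∈ J, j ∉ S ω} := by
    have : {ω | ∀ j ∈ J, j ∉ S ω} = ⋂ j ∈ (J : Set (Fin n)), {ω | j ∈ S ω}ᶜ := by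
      ext ω; simp
    rw [this]
    exact MeasurableSet.biInter (Set.to_countable _) fun j _ => (hmeas j).compl
  -- per-A bound
  have hA_bound : ∀ A : Finset (Fin n),
      (ℙ ({ω | ∀ j ∈ J, j ∉ S ω} ∩ E A)).toReal ≤
        (ℙ (E A)).toReal * ∏ j ∈ J ∩ A, (1 - p1 j) := by
    intro A
    by_cases hA : ℙ (E A) = 0
    · have h0 : ℙ ({ω | ∀ j ∈ J, j ∉ S ω} ∩ E A) = 0 :=
        measure_mono_null Set.inter_subset_right hA
      rw [h0]
      simp only [ENNReal.toReal_zero]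
      exact mul_nonneg ENNReal.toReal_nonneg (Finset.prod_nonneg fun j _ => hq1nn j)
    · haveI := ProbabilityTheory.cond_isProbabilityMeasure (μ := ℙ) (s := E A) hA
      have heq : (ℙ ({ω | ∀ j ∈ J, j ∉ S ω} ∩ E A)).toReal =
          (ℙ (E A)).toReal * ((ℙ[|E A]) {ω | ∀ j ∈ J, j ∉ S ω}).toReal := by
        rw [ProbabilityTheory.cond_apply (hmeas₀ A), ENNReal.toReal_mul, ENNReal.toReal_inv,
          Set.inter_comm]
        have hne : (ℙ (E A)).toReal ≠ 0 := by
          simp [ENNReal.toReal_eq_zero_iff, hA, measure_ne_top]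
        field_simp
        exact (mul_div_cancel_left₀ _ hne).symm
      rw [heq]
      have hmono : ((ℙ[|E A]) {ω | ∀ j ∈ J, j ∉ S ω}).toReal ≤
          ((ℙ[|E A]) {ω | ∀ j ∈ J ∩ A, j ∉ S ω}).toReal := by
        apply ENNReal.toReal_mono (measure_ne_top _ _)
        apply measure_mono
        intro ω hω j hj
        exact hω j (Finset.mem_of_mem_inter_left hj)
      calc (ℙ (E A)).toReal * ((ℙ[|E A]) {ω | ∀ j ∈ J, j ∉ S ω}).toReal
          ≤ (ℙ (E A)).toReal * ((ℙ[|E A]) {ω | ∀ j ∈ J ∩ A, j ∉ S ω}).toReal :=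
            mul_le_mul_of_nonneg_left hmono ENNReal.toReal_nonneg
        _ ≤ (ℙ (E A)).toReal * ∏ j ∈ J ∩ A, (1 - p1 j) :=
            mul_le_mul_of_nonneg_left
              (hstage1 A hA (J ∩ A) (Finset.inter_subset_right))
              ENNReal.toReal_nonneg
  -- expansion of the conditional product
  have hexpand : ∀ A : Finset (Fin n), ∏ j ∈ J ∩ A, (1 - p1 j) =
      ∑ K ∈ J.powerset, ((∏ j ∈ K, p1 j) * (if ∀ j ∈ K, j ∉ A then (1:ℝ) else 0)) *
        ∏ j ∈ J \ K, (1 - p1 j) := by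
    intro A
    have h1 : ∏ j ∈ J ∩ A, (1 - p1 j) =
        ∏ j ∈ J, ((p1 j * (if j ∈ A then 0 else 1)) + (1 - p1 j)) := by
      rw [← Finset.filter_mem_eq_inter, Finset.prod_filter]
      apply Finset.prod_congr rfl
      intro j _
      by_cases hj : j ∈ A <;> simp [hj] <;> ring
    rw [h1, Finset.prod_add]
    apply Finset.sum_congr rfl
    intro K _
    congr 1
    rw [Finset.prod_mul_distrib]
    congr 1
    by_cases h : ∀ j ∈ K, j ∉ A
    · rw [if_pos h, Finset.prod_eq_one]
      intro j hj; rw [if_neg (h j hj)]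
    · rw [if_neg h]
      push_neg at h
      obtain ⟨j, hjK, hjA⟩ := h
      exact Finset.prod_eq_zero hjK (by rw [if_pos hjA])
  -- probability of stage-0 exclusion as a sum
  have hsum0 : ∀ K : Finset (Fin n),
      ∑ A : Finset (Fin n), (ℙ (E A)).toReal * (if ∀ j ∈ K, j ∉ A then (1:ℝ) else 0) =
        (ℙ {ω | ∀ j ∈ K, j ∉ S₀ ω}).toReal := by
    intro K
    have hTm : MeasurableSet {ω | ∀ j ∈ K, j ∉ S₀ ω} := by
      have : {ω | ∀ j ∈ K, j ∉ S₀ ω} =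
          ⋃ A ∈ Finset.univ.filter (fun A : Finset (Fin n) => ∀ j ∈ K, j ∉ A), E A := by
        ext ω
        simp only [Set.mem_iUnion, Finset.mem_filter, Finset.mem_univ, true_and, exists_prop,
          hE, Set.mem_setOf_eq]
        exact ⟨fun h => ⟨S₀ ω, h, rfl⟩, fun ⟨A, h, hA⟩ j hj => hA ▸ h j hj⟩
      rw [this]
      exact Finset.measurableSet_biUnion _ fun A _ => hmeas₀ A
    rw [hdecomp _ hTm]
    apply Finset.sum_congr rfl
    intro A _
    by_cases h : ∀ j ∈ K, j ∉ A
    · rw [if_pos h, mul_one]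
      have heq : {ω | ∀ j ∈ K, j ∉ S₀ ω} ∩ E A = E A := by
        ext ω
        simp only [Set.mem_inter_iff, hE, Set.mem_setOf_eq, and_iff_right_iff_imp]
        intro hA j hj
        rw [hA]; exact h j hj
      rw [heq]
    · rw [if_neg h, mul_zero]
      have : {ω | ∀ j ∈ K, j ∉ S₀ ω} ∩ E A = ∅ := by
        ext ω
        simp only [Set.mem_inter_iff, hE, Set.mem_setOf_eq, Set.mem_empty_iff_false, iff_false]
        rintro ⟨hω, hA⟩
        exact h fun j hj => hA ▸ hω j hj
      rw [this]; simp
  -- p0 = 1 - q0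
  have hp0 : ∀ j : Fin n, (ℙ {ω | j ∈ S₀ ω}).toReal = 1 - (ℙ {ω | j ∉ S₀ ω}).toReal := by
    intro j
    have hm : MeasurableSet {ω | j ∈ S₀ ω} := by
      have : {ω | j ∈ S₀ ω} =
          ⋃ A ∈ Finset.univ.filter (fun A : Finset (Fin n) => j ∈ A), E A := by
        ext ω
        simp only [Set.mem_iUnion, Finset.mem_filter, Finset.mem_univ, true_and, exists_prop,
          hE, Set.mem_setOf_eq]
        exact ⟨fun h => ⟨S₀ ω, h, rfl⟩, fun ⟨A, h, hA⟩ => hA ▸ h⟩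
      rw [this]
      exact Finset.measurableSet_biUnion _ fun A _ => hmeas₀ A
    have hcompl : {ω | j ∉ S₀ ω} = {ω | j ∈ S₀ ω}ᶜ := rfl
    have := measure_add_measure_compl (μ := ℙ) hm
    rw [measure_univ] at this
    have h2 := congrArg ENNReal.toReal this
    rw [ENNReal.toReal_add (measure_ne_top _ _) (measure_ne_top _ _), ENNReal.toReal_one] at h2
    rw [hcompl]
    linarith
  -- main chain
  calc (ℙ {ω | ∀ j ∈ J, j ∉ S ω}).toReal
      = ∑ A : Finset (Fin n), (ℙ ({ω | ∀ j ∈ J, j ∉ S ω} ∩ E A)).toReal :=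
        hdecomp _ hexclS
    _ ≤ ∑ A : Finset (Fin n), (ℙ (E A)).toReal * ∏ j ∈ J ∩ A, (1 - p1 j) :=
        Finset.sum_le_sum fun A _ => hA_bound A
    _ = ∑ K ∈ J.powerset, ((∏ j ∈ K, p1 j) * (∏ j ∈ J \ K, (1 - p1 j))) *
          (∑ A : Finset (Fin n), (ℙ (E A)).toReal * (if ∀ j ∈ K, j ∉ A then (1:ℝ) else 0)) := by
        simp_rw [hexpand, Finset.mul_sum]
        rw [Finset.sum_comm]
        apply Finset.sum_congr rfl
        intro K _
        apply Finset.sum_congr rfl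
        intro A _
        ring
    _ = ∑ K ∈ J.powerset, ((∏ j ∈ K, p1 j) * (∏ j ∈ J \ K, (1 - p1 j))) *
          (ℙ {ω | ∀ j ∈ K, j ∉ S₀ ω}).toReal := by
        simp_rw [hsum0]
    _ ≤ ∑ K ∈ J.powerset, ((∏ j ∈ K, p1 j) * (∏ j ∈ J \ K, (1 - p1 j))) *
          ∏ j ∈ K, (ℙ {ω | j ∉ S₀ ω}).toReal := by
        apply Finset.sum_le_sum
        intro K _
        exact mul_le_mul_of_nonneg_left (hstage0 K)
          (mul_nonneg (Finset.prod_nonneg fun j _ => (hp1 j).1)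
            (Finset.prod_nonneg fun j _ => hq1nn j))
    _ = ∏ j ∈ J, (p1 j * (ℙ {ω | j ∉ S₀ ω}).toReal + (1 - p1 j)) := by
        rw [Finset.prod_add]
        apply Finset.sum_congr rfl
        intro K _
        rw [Finset.prod_mul_distrib]
        ring
    _ = ∏ j ∈ J, ((ℙ {ω | j ∉ S₀ ω}).toReal
          + (ℙ {ω | j ∈ S₀ ω}).toReal * (1 - p1 j)) := by
        apply Finset.prod_congr rfl
        intro j _
        rw [hp0 j]
        ring
end
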